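/- arXiv:2209.07400 — 5 statements merged into one kernel-verified Lean document; each statement's English description precedes it below -/
import Mathlib

section
/- Privacy of the Gaussian mechanism (zCDP form). Let n be a positive integer, ρ > 0, and let μ₁, μ₂ ∈ ℝ satisfy |μ₁ − μ₂| ≤ 1/n (the sensitivity of a statistical query on neighboring datasets of size n). Set v = 1/(2n²ρ). Then for every α ∈ (1, ∞), ∫_ℝ p_{μ₁,v}(x)^α · p_{μ₂,v}(x)^{1−α} dx ≤ exp((α−1) · α · ρ), i.e., the α-Rényi divergence between N(μ₁, v) and N(μ₂, v) is at most ρα for every α ∈ (1, ∞); hence releasing q(D) + Z with Z ∼ N(0, 1/(2n²ρ)) satisfies ρ-zCDP. -/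
open MeasureTheory Real

noncomputable def gaussDensity (μ v x : ℝ) : ℝ :=
  (Real.sqrt (2 * π * v))⁻¹ * Real.exp (-(x - μ) ^ 2 / (2 * v))

/-- Privacy of the Gaussian mechanism (zCDP form): if `|μ₁ - μ₂| ≤ 1/n` and
`v = 1/(2 n² ρ)`, then for every `α > 1`,
`∫ p_{μ₁,v}^α p_{μ₂,v}^{1-α} ≤ exp((α-1)·α·ρ)`. -/
theorem gaussian_mechanism_zCDP (n : ℕ) (hn : 0 < n) (ρ : ℝ) (hρ : 0 < ρ)
    (μ₁ μ₂ : ℝ) (hsens : |μ₁ - μ₂| ≤ 1 / n)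
    (v : ℝ) (hv : v = 1 / (2 * n ^ 2 * ρ)) :
    ∀ α : ℝ, 1 < α →
      ∫ x : ℝ, gaussDensity μ₁ v x ^ α * gaussDensity μ₂ v x ^ (1 - α) ≤
        Real.exp ((α - 1) * α * ρ) := by
  intro α hα
  have hn' : (0:ℝ) < n := by exact_mod_cast hn
  have hv0 : 0 < v := by rw [hv]; positivity
  have h2v : (0:ℝ) < 2 * v := by linarith
  have hs : (0:ℝ) < (Real.sqrt (2 * π * v))⁻¹ := by
    have : (0:ℝ) < 2 * π * v := by positivity
    positivity
  set s := (Real.sqrt (2 * π * v))⁻¹ with hsdef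
  set m := α * μ₁ + (1 - α) * μ₂ with hm
  set K := α * (α - 1) * (μ₁ - μ₂) ^ 2 / (2 * v) with hK
  have hpt : ∀ x : ℝ, gaussDensity μ₁ v x ^ α * gaussDensity μ₂ v x ^ (1 - α)
      = Real.exp K * (s * Real.exp (-(x - m) ^ 2 / (2 * v))) := by
    intro x
    unfold gaussDensity
    rw [Real.mul_rpow (le_of_lt hs) (Real.exp_pos _).le,
        Real.mul_rpow (le_of_lt hs) (Real.exp_pos _).le,
        ← Real.exp_mul, ← Real.exp_mul]
    have hss : s ^ α * s ^ (1 - α) = s := by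
      rw [← Real.rpow_add hs]; norm_num
    calc s ^ α * Real.exp (-(x - μ₁) ^ 2 / (2 * v) * α)
        * (s ^ (1 - α) * Real.exp (-(x - μ₂) ^ 2 / (2 * v) * (1 - α)))
        = (s ^ α * s ^ (1 - α)) *
          (Real.exp (-(x - μ₁) ^ 2 / (2 * v) * α) * Real.exp (-(x - μ₂) ^ 2 / (2 * v) * (1 - α))) := by ring
      _ = s * Real.exp (-(x - μ₁) ^ 2 / (2 * v) * α + -(x - μ₂) ^ 2 / (2 * v) * (1 - α)) := by
          rw [hss, ← Real.exp_add]
      _ = s * (Real.exp K * Real.exp (-(x - m) ^ 2 / (2 * v))) := by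
          rw [← Real.exp_add]
          congr 1
          rw [hK, hm]
          field_simp
          ring
      _ = Real.exp K * (s * Real.exp (-(x - m) ^ 2 / (2 * v))) := by ring
  simp only [hpt]
  rw [integral_const_mul, integral_const_mul]
  have hgauss : ∫ x : ℝ, Real.exp (-(x - m) ^ 2 / (2 * v)) = Real.sqrt (2 * π * v) := by
    have h1 : (fun x : ℝ => Real.exp (-(x - m) ^ 2 / (2 * v)))
        = fun x => Real.exp (-(1 / (2 * v)) * (x - m) ^ 2) := by
      funext x; congr 1; field_simp
    rw [h1, integral_sub_right_eq_self (μ := volume) (fun x => Real.exp (-(1 / (2 * v)) * x ^ 2)) m,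
        integral_gaussian]
    congr 1
    rw [div_div_eq_mul_div]
    field_simp
  rw [hgauss, hsdef, inv_mul_cancel₀ (Real.sqrt_ne_zero'.mpr (by positivity)), mul_one]
  rw [Real.exp_le_exp, hK]
  have hd : -(1 / (n:ℝ)) ≤ μ₁ - μ₂ ∧ μ₁ - μ₂ ≤ 1 / n := abs_le.mp hsens
  have hd2 : (μ₁ - μ₂) ^ 2 ≤ (1 / (n:ℝ)) ^ 2 := sq_le_sq' hd.1 hd.2
  have hdn : (μ₁ - μ₂) ^ 2 * (n:ℝ) ^ 2 ≤ 1 := by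
    have h1 : (1 / (n:ℝ)) ^ 2 * (n:ℝ) ^ 2 = 1 := by field_simp
    nlinarith
  have hKeq : α * (α - 1) * (μ₁ - μ₂) ^ 2 / (2 * v)
      = α * (α - 1) * ((μ₁ - μ₂) ^ 2 * (n:ℝ) ^ 2) * ρ := by
    rw [hv]; field_simp
  rw [hKeq]
  have hαpos : 0 < α * (α - 1) := by nlinarith
  nlinarith [mul_pos hαpos hρ]
end

section
/- Conversion from pure differential privacy to zCDP. Let P and Q be probability measures on a measurable space, mutually absolutely continuous, and let ε > 0. Suppose that for every measurable set S, P(S) ≤ e^ε · Q(S) and Q(S) ≤ e^ε · P(S). Then for every α ∈ (1, ∞), ∫ (dP/dQ)^α dQ ≤ exp((α−1) · α · ε²/2), i.e., D_α(P‖Q) ≤ (ε²/2) · α for all α ∈ (1, ∞); hence ε-differential privacy implies (ε²/2)-zCDP. -/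
open MeasureTheory Real
open scoped ENNReal


lemma sinh_le_mul_cosh {x : ℝ} (hx : 0 ≤ x) : Real.sinh x ≤ x * Real.cosh x := by
  have key : MonotoneOn (fun y : ℝ => y * Real.cosh y - Real.sinh y) (Set.Ici 0) := by
    apply monotoneOn_of_deriv_nonneg (convex_Ici 0)
    · exact (continuous_id.mul Real.continuous_cosh).sub Real.continuous_sinh |>.continuousOn
    · intro y _
      exact ((differentiable_id.mul Real.differentiable_cosh).sub
        Real.differentiable_sinh).differentiableAt.differentiableWithinAt
    · intro y hy
      have h : HasDerivAt (fun y : ℝ => y * Real.cosh y - Real.sinh y)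
          (1 * Real.cosh y + y * Real.sinh y - Real.cosh y) y :=
        ((hasDerivAt_id y).mul (Real.hasDerivAt_cosh y)).sub (Real.hasDerivAt_sinh y)
      rw [h.deriv]
      have hy' : 0 < y := by simpa using hy
      nlinarith [Real.sinh_pos_iff.2 hy', hy'.le]
  have := key (Set.self_mem_Ici) hx hx
  simpa using this

lemma cosh_mul_le {t k : ℝ} (ht : 0 ≤ t) (hk : 1 ≤ k) :
    Real.cosh (k * t) ≤ Real.cosh t * Real.exp ((k ^ 2 - 1) * t ^ 2 / 2) := by
  have hmono : MonotoneOn (fun s : ℝ => s ^ 2 * (t ^ 2 / 2) - Real.log (Real.cosh (s * t)))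
      (Set.Ici 0) := by
    apply monotoneOn_of_deriv_nonneg (convex_Ici 0)
    case hf =>
      intro s _
      have : DifferentiableAt ℝ (fun s : ℝ => s ^ 2 * (t ^ 2 / 2) - Real.log (Real.cosh (s * t))) s := by
        apply DifferentiableAt.sub
        · fun_prop
        · apply DifferentiableAt.log
          · fun_prop
          · exact (Real.cosh_pos _).ne'
      exact this.continuousAt.continuousWithinAt
    case hf' =>
      intro s _
      apply DifferentiableAt.differentiableWithinAt
      apply DifferentiableAt.sub
      · fun_prop
      · apply DifferentiableAt.log
        · fun_prop
        · exact (Real.cosh_pos _).ne'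
    · intro s hs
      have hs' : 0 < s := by simpa using hs
      have hd : HasDerivAt (fun s : ℝ => s ^ 2 * (t ^ 2 / 2) - Real.log (Real.cosh (s * t)))
          (2 * s * (t ^ 2 / 2) - (Real.sinh (s * t) * t) / Real.cosh (s * t)) s := by
        apply HasDerivAt.sub
        · simpa using (hasDerivAt_pow 2 s).mul_const (t ^ 2 / 2)
        · have h1 : HasDerivAt (fun s : ℝ => s * t) t s := by simpa using (hasDerivAt_id s).mul_const t
          have h2 : HasDerivAt (fun s : ℝ => Real.cosh (s * t)) (Real.sinh (s * t) * t) s :=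
            by have := (Real.hasDerivAt_cosh (s * t)).comp s h1; exact this
          exact h2.log (Real.cosh_pos _).ne'
      rw [hd.deriv]
      have hc := Real.cosh_pos (s * t)
      have hb : Real.sinh (s * t) ≤ (s * t) * Real.cosh (s * t) :=
        sinh_le_mul_cosh (by positivity)
      rw [sub_nonneg, div_le_iff₀ hc]
      nlinarith
  have key := hmono (Set.mem_Ici.2 (by norm_num : (0:ℝ) ≤ 1)) (Set.mem_Ici.2 (by linarith)) hk
  simp only [one_pow, one_mul] at key
  have h1 : Real.log (Real.cosh (k * t)) ≤
      Real.log (Real.cosh t) + (k ^ 2 - 1) * t ^ 2 / 2 := by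
    nlinarith [key]
  calc Real.cosh (k * t) = Real.exp (Real.log (Real.cosh (k * t))) :=
        (Real.exp_log (Real.cosh_pos _)).symm
    _ ≤ Real.exp (Real.log (Real.cosh t) + (k ^ 2 - 1) * t ^ 2 / 2) := Real.exp_le_exp.2 h1
    _ = Real.cosh t * Real.exp ((k ^ 2 - 1) * t ^ 2 / 2) := by
        rw [Real.exp_add, Real.exp_log (Real.cosh_pos _)]

lemma dp_exp_ineq {ε α : ℝ} (hε : 0 < ε) (hα : 1 < α) :
    (Real.exp ε * Real.exp (-(ε * α)) - Real.exp (-ε) * Real.exp (ε * α)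
      + (Real.exp (ε * α) - Real.exp (-(ε * α)))) / (Real.exp ε - Real.exp (-ε))
      ≤ Real.exp ((α - 1) * α * ε ^ 2 / 2) := by
  set u := Real.exp (ε / 2) with hu_def
  set v := Real.exp ((2 * α - 1) * (ε / 2)) with hv_def
  set E := Real.exp ((α - 1) * α * ε ^ 2 / 2) with hE_def
  have hupos : 0 < u := Real.exp_pos _
  have hvpos : 0 < v := Real.exp_pos _
  have hEpos : 0 < E := Real.exp_pos _
  have hu1 : 1 < u := by
    rw [hu_def, ← Real.exp_zero]
    exact Real.exp_lt_exp.2 (by linarith)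
  have he : Real.exp ε = u * u := by rw [hu_def, ← Real.exp_add]; ring_nf
  have hne : Real.exp (-ε) = (u * u)⁻¹ := by rw [Real.exp_neg, he]
  have hea : Real.exp (ε * α) = u * v := by
      rw [hu_def, hv_def, ← Real.exp_add]; congr 1; ring
  have hnea : Real.exp (-(ε * α)) = (u * v)⁻¹ := by rw [Real.exp_neg, hea]
  have hcosh : v + v⁻¹ ≤ (u + u⁻¹) * E := by
      have h := cosh_mul_le (t := ε / 2) (k := 2 * α - 1) (by linarith) (by linarith)
      rw [Real.cosh_eq, Real.cosh_eq] at h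
      have hexp : ((2 * α - 1) ^ 2 - 1) * (ε / 2) ^ 2 / 2 = (α - 1) * α * ε ^ 2 / 2 := by ring
      rw [hexp] at h
      rw [Real.exp_neg, Real.exp_neg] at h
      linarith
  have hsub : 0 < u - u⁻¹ := by
      have : u⁻¹ < 1 := by rw [inv_lt_one_iff₀]; right; exact hu1
      linarith
  have hD : 0 < Real.exp ε - Real.exp (-ε) := by
      rw [he, hne]
      have : (u * u)⁻¹ < 1 := by rw [inv_lt_one_iff₀]; right; nlinarith
      nlinarith
  rw [div_le_iff₀ hD, he, hne, hea, hnea]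
  have hmul : (u - u⁻¹) * (v + v⁻¹) ≤ (u - u⁻¹) * ((u + u⁻¹) * E) :=
      mul_le_mul_of_nonneg_left hcosh hsub.le
  have hL : u * u * (u * v)⁻¹ - (u * u)⁻¹ * (u * v) + (u * v - (u * v)⁻¹)
        = (u - u⁻¹) * (v + v⁻¹) := by field_simp; ring
  have hR : (u - u⁻¹) * ((u + u⁻¹) * E) = E * (u * u - (u * u)⁻¹) := by field_simp; ring
  linarith [hL ▸ hR ▸ hmul]

/-- Conversion from pure differential privacy to zCDP: if `P(S) ≤ e^ε Q(S)` and
`Q(S) ≤ e^ε P(S)` for all measurable `S`, then for every `α ∈ (1,∞)`,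
`∫ (dP/dQ)^α dQ ≤ exp((α-1)·α·ε²/2)`. -/
theorem pureDP_to_zCDP {Ω : Type*} [MeasurableSpace Ω]
    (P Q : Measure Ω) [IsProbabilityMeasure P] [IsProbabilityMeasure Q]
    (hPQ : P ≪ Q) (hQP : Q ≪ P) (ε : ℝ) (hε : 0 < ε)
    (hDP₁ : ∀ S : Set Ω, MeasurableSet S → P S ≤ ENNReal.ofReal (Real.exp ε) * Q S)
    (hDP₂ : ∀ S : Set Ω, MeasurableSet S → Q S ≤ ENNReal.ofReal (Real.exp ε) * P S) :
    ∀ α : ℝ, 1 < α →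
      ∫ x, (P.rnDeriv Q x).toReal ^ α ∂Q ≤ Real.exp ((α - 1) * α * ε ^ 2 / 2) := by
  intro α hα
  set c : ℝ≥0∞ := ENNReal.ofReal (Real.exp ε) with hc_def
  have hc0 : c ≠ 0 := by simp [hc_def, Real.exp_pos]
  have hctop : c ≠ ⊤ := ENNReal.ofReal_ne_top
  -- general upper bound lemma
  have key : ∀ (μ ν : Measure Ω) [IsProbabilityMeasure μ] [IsProbabilityMeasure ν],
      (∀ S : Set Ω, MeasurableSet S → μ S ≤ c * ν S) →
      μ.rnDeriv ν ≤ᵐ[ν] fun _ => c := by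
    intro μ ν _ _ hDP
    have hle : c⁻¹ • μ ≤ ν := by
      rw [Measure.le_iff]
      intro S hS
      rw [Measure.smul_apply, smul_eq_mul]
      calc c⁻¹ * μ S ≤ c⁻¹ * (c * ν S) :=
            mul_le_mul_right (hDP S hS) _
        _ = (c⁻¹ * c) * ν S := by rw [mul_assoc]
        _ = ν S := by rw [ENNReal.inv_mul_cancel hc0 hctop, one_mul]
    have h1 : (c⁻¹ • μ).rnDeriv ν ≤ᵐ[ν] 1 := Measure.rnDeriv_le_one_of_le hle
    have h2 : (c⁻¹ • μ).rnDeriv ν =ᵐ[ν] c⁻¹ • μ.rnDeriv ν :=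
      Measure.rnDeriv_smul_left_of_ne_top μ ν (ENNReal.inv_ne_top.2 hc0)
    filter_upwards [h1, h2] with x hx1 hx2
    rw [hx2] at hx1
    simp only [Pi.smul_apply, smul_eq_mul, Pi.one_apply] at hx1
    calc μ.rnDeriv ν x = c * (c⁻¹ * μ.rnDeriv ν x) := by
          rw [← mul_assoc, ENNReal.mul_inv_cancel hc0 hctop, one_mul]
      _ ≤ c * 1 := mul_le_mul_right hx1 _
      _ = c := mul_one c
  have h_up : P.rnDeriv Q ≤ᵐ[Q] fun _ => c := key P Q hDP₁
  have h_upQ : Q.rnDeriv P ≤ᵐ[P] fun _ => c := key Q P hDP₂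
  have h_upQ' : Q.rnDeriv P ≤ᵐ[Q] fun _ => c := h_upQ.filter_mono hQP.ae_le
  have h_inv : (Q.rnDeriv P)⁻¹ =ᵐ[Q] P.rnDeriv Q := Measure.inv_rnDeriv hQP
  have h_low : (fun _ => c⁻¹) ≤ᵐ[Q] P.rnDeriv Q := by
    filter_upwards [h_upQ', h_inv] with x hx1 hx2
    rw [← hx2]
    exact ENNReal.inv_le_inv' hx1
  have h_top : ∀ᵐ x ∂Q, P.rnDeriv Q x ≠ ⊤ := Measure.rnDeriv_ne_top P Q
  -- real-valued bounds
  set a : ℝ := Real.exp (-ε) with ha_def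
  set b : ℝ := Real.exp ε with hb_def
  have ha_pos : 0 < a := Real.exp_pos _
  have hab : a < b := Real.exp_lt_exp.2 (by linarith)
  have hD_pos : 0 < b - a := by linarith
  have hcinv : c⁻¹ = ENNReal.ofReal a := by
    rw [hc_def, ha_def, Real.exp_neg, ENNReal.ofReal_inv_of_pos (Real.exp_pos ε)]
  have h_bounds : ∀ᵐ x ∂Q, a ≤ (P.rnDeriv Q x).toReal ∧ (P.rnDeriv Q x).toReal ≤ b := by
    filter_upwards [h_up, h_low, h_top] with x hx1 hx2 hx3
    constructor
    · rw [hcinv] at hx2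
      exact (ENNReal.ofReal_le_iff_le_toReal hx3).1 hx2
    · exact ENNReal.toReal_le_of_le_ofReal (Real.exp_nonneg ε) hx1
  set C₁ : ℝ := (b * a ^ α - a * b ^ α) / (b - a) with hC1_def
  set C₂ : ℝ := (b ^ α - a ^ α) / (b - a) with hC2_def
  -- pointwise chord bound
  have h_chord : ∀ y : ℝ, a ≤ y → y ≤ b → y ^ α ≤ C₁ + y * C₂ := by
    intro y hy1 hy2
    have hcvx := convexOn_rpow (le_of_lt hα)
    have hl : (0:ℝ) ≤ (b - y) / (b - a) := by
      apply div_nonneg _ hD_pos.le; linarith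
    have hm : (0:ℝ) ≤ (y - a) / (b - a) := by
      apply div_nonneg _ hD_pos.le; linarith
    have hsum : (b - y) / (b - a) + (y - a) / (b - a) = 1 := by
      field_simp; ring
    have h := hcvx.2 (Set.mem_Ici.2 ha_pos.le) (Set.mem_Ici.2 (by linarith : (0:ℝ) ≤ b))
      hl hm hsum
    simp only [smul_eq_mul] at h
    have hy : (b - y) / (b - a) * a + (y - a) / (b - a) * b = y := by
      field_simp; ring
    rw [hy] at h
    refine h.trans (le_of_eq ?_)
    rw [hC1_def, hC2_def]
    field_simp
    ring
  -- integrability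
  have h_meas : Measurable fun x => (P.rnDeriv Q x).toReal :=
    (Measure.measurable_rnDeriv P Q).ennreal_toReal
  have h_int_r : Integrable (fun x => (P.rnDeriv Q x).toReal) Q :=
    Measure.integrable_toReal_rnDeriv
  have h_int_lin : Integrable (fun x => C₁ + (P.rnDeriv Q x).toReal * C₂) Q :=
    (integrable_const C₁).add (h_int_r.mul_const C₂)
  have h_int_g : Integrable (fun x => (P.rnDeriv Q x).toReal ^ α) Q := by
    refine Integrable.mono' (integrable_const (b ^ α))
      ((Real.continuous_rpow_const (by linarith : (0:ℝ) ≤ α)).measurable.comp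
        h_meas).aestronglyMeasurable ?_
    filter_upwards [h_bounds] with x ⟨hx1, hx2⟩
    rw [Real.norm_eq_abs, abs_of_nonneg (Real.rpow_nonneg ENNReal.toReal_nonneg α)]
    exact Real.rpow_le_rpow ENNReal.toReal_nonneg hx2 (by linarith)
  -- integral bound
  have h_int_le : ∫ x, (P.rnDeriv Q x).toReal ^ α ∂Q
      ≤ ∫ x, (C₁ + (P.rnDeriv Q x).toReal * C₂) ∂Q := by
    refine integral_mono_ae h_int_g h_int_lin ?_
    filter_upwards [h_bounds] with x ⟨hx1, hx2⟩
    exact h_chord _ hx1 hx2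
  have h_int_eval : ∫ x, (C₁ + (P.rnDeriv Q x).toReal * C₂) ∂Q = C₁ + C₂ := by
    rw [integral_add (integrable_const C₁) (h_int_r.mul_const C₂), integral_const,
      integral_mul_const, Measure.integral_toReal_rnDeriv hPQ]
    simp
  have h_final : C₁ + C₂ ≤ Real.exp ((α - 1) * α * ε ^ 2 / 2) := by
    have hba : b ^ α = Real.exp (ε * α) := by
      rw [hb_def, ← Real.exp_mul]
    have haa : a ^ α = Real.exp (-(ε * α)) := by
      rw [ha_def, ← Real.exp_mul, neg_mul]
    rw [hC1_def, hC2_def, ← add_div, hba, haa, hb_def, ha_def]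
    exact dp_exp_ineq hε hα
  calc ∫ x, (P.rnDeriv Q x).toReal ^ α ∂Q ≤ C₁ + C₂ := by rw [← h_int_eval]; exact h_int_le
    _ ≤ _ := h_final
end

section
/- Gumbel-max trick. Let m ≥ 1, β > 0, y : Fin m → ℝ, fix j ∈ Fin m, and let P be the product on (Fin m → ℝ) of m independent copies of the Gumbel measure with scale β. Then P({ z : Fin m → ℝ | ∀ i ≠ j, y(j) + z(j) > y(i) + z(i) }) = exp(y(j)/β) / Σ_{i} exp(y(i)/β). In particular, the index maximizing the Gumbel-perturbed scores is distributed according to the softmax of y at temperature β. -/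
open MeasureTheory Real
open Set Filter Topology

/-- The Gumbel measure with scale `β`, given by its Lebesgue density
`z ↦ (1/β) exp(−z/β − exp(−z/β))`. -/
noncomputable def gumbelMeasure (β : ℝ) : Measure ℝ :=
  volume.withDensity fun z =>
    ENNReal.ofReal ((1 / β) * Real.exp (-z / β - Real.exp (-z / β)))

instance gumbelMeasure.sigmaFinite (β : ℝ) : SigmaFinite (gumbelMeasure β) := by
  unfold gumbelMeasure
  infer_instance

section Aux

variable {β c : ℝ}

/-- The basic integrand. -/
noncomputable def gmFun (β c t : ℝ) : ℝ :=
  (1 / β) * (Real.exp (-t / β) * Real.exp (-(c * Real.exp (-t / β))))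

lemma gmFun_nonneg (β c t : ℝ) (hβ : 0 < β) : 0 ≤ gmFun β c t := by
  unfold gmFun; positivity

lemma continuous_gmFun (β c : ℝ) : Continuous (gmFun β c) := by
  unfold gmFun; fun_prop

lemma hasDerivAt_G (hβ : 0 < β) (hc : c ≠ 0) (t : ℝ) :
    HasDerivAt (fun t => (1 / c) * Real.exp (-(c * Real.exp (-t / β))))
      (gmFun β c t) t := by
  have h1 : HasDerivAt (fun t : ℝ => -t / β) (-1 / β) t := by
    simpa using ((hasDerivAt_id t).neg.div_const β)
  have h4 := (((h1.exp.const_mul c).neg).exp).const_mul (1 / c)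
  refine h4.congr_deriv ?_
  unfold gmFun
  simp only [Pi.neg_apply]
  field_simp

lemma hasDerivAt_H (hβ : 0 < β) (hc : c ≠ 0) (x : ℝ) :
    HasDerivAt (fun x => -(1 / c) * Real.exp (-(c * Real.exp (x / β))))
      (gmFun β c (-x)) x := by
  have h1 : HasDerivAt (fun x : ℝ => x / β) (1 / β) x := (hasDerivAt_id x).div_const β
  have h4 := (((h1.exp.const_mul c).neg).exp).const_mul (-(1 / c))
  refine h4.congr_deriv ?_
  unfold gmFun
  rw [neg_neg]
  simp only [Pi.neg_apply]
  field_simp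

lemma tendsto_inner_atTop (hβ : 0 < β) :
    Tendsto (fun t : ℝ => Real.exp (-t / β)) atTop (𝓝 0) := by
  apply Real.tendsto_exp_atBot.comp
  apply Tendsto.atBot_div_const hβ
  exact tendsto_neg_atTop_atBot

lemma tendsto_inner_atBot (hβ : 0 < β) :
    Tendsto (fun t : ℝ => Real.exp (-t / β)) atBot atTop := by
  apply Real.tendsto_exp_atTop.comp
  apply Tendsto.atTop_div_const hβ
  exact tendsto_neg_atBot_atTop

lemma tendsto_G_atTop (hβ : 0 < β) (hc : 0 < c) :
    Tendsto (fun t => (1 / c) * Real.exp (-(c * Real.exp (-t / β)))) atTop (𝓝 (1 / c)) := by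
  have h : Tendsto (fun t : ℝ => -(c * Real.exp (-t / β))) atTop (𝓝 0) := by
    have := (tendsto_inner_atTop hβ).const_mul c
    simpa using this.neg
  have := (Real.continuous_exp.tendsto 0).comp h
  simpa using this.const_mul (1 / c)

lemma tendsto_G_atBot (hβ : 0 < β) (hc : 0 < c) :
    Tendsto (fun t => (1 / c) * Real.exp (-(c * Real.exp (-t / β)))) atBot (𝓝 0) := by
  have h : Tendsto (fun t : ℝ => -(c * Real.exp (-t / β))) atBot atBot := by
    exact tendsto_neg_atTop_atBot.comp ((tendsto_inner_atBot hβ).const_mul_atTop hc)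
  have := Real.tendsto_exp_atBot.comp h
  simpa using this.const_mul (1 / c)

lemma integrable_gmFun (hβ : 0 < β) (hc : 0 < c) : Integrable (gmFun β c) := by
  rw [← integrableOn_univ, ← Set.Iic_union_Ioi (a := (0 : ℝ))]
  apply IntegrableOn.union
  · -- (-∞, 0] via reflection
    have hIci : IntegrableOn (fun x => gmFun β c (-x)) (Ici (0 : ℝ)) := by
      rw [integrableOn_Ici_iff_integrableOn_Ioi]
      apply integrableOn_Ioi_deriv_of_nonneg' (fun x _ => hasDerivAt_H hβ hc.ne' x)
        (fun x _ => gmFun_nonneg β c (-x) hβ)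
      -- tendsto at top of H to 0
      have h : Tendsto (fun x : ℝ => -(c * Real.exp (x / β))) atTop atBot := by
        apply tendsto_neg_atTop_atBot.comp
        apply Tendsto.const_mul_atTop hc
        exact Real.tendsto_exp_atTop.comp (Tendsto.atTop_div_const hβ tendsto_id)
      have := Real.tendsto_exp_atBot.comp h
      simpa using this.const_mul (-(1 / c))
    have key := MeasurePreserving.integrableOn_comp_preimage
      (Measure.measurePreserving_neg (volume : Measure ℝ))
      (Homeomorph.neg ℝ).measurableEmbedding (f := gmFun β c) (s := Iic (0:ℝ))
    have hpre : (Neg.neg ⁻¹' Iic (0:ℝ)) = Ici (0:ℝ) := by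
      ext x; simp
    rw [hpre] at key
    exact key.1 hIci
  · -- (0, ∞) by domination
    have hg : IntegrableOn (fun t : ℝ => (1 / β) * Real.exp (-(1 / β) * t)) (Ioi 0) :=
      (exp_neg_integrableOn_Ioi 0 (by positivity : (0:ℝ) < 1 / β)).const_mul (1 / β)
    refine hg.mono' ((continuous_gmFun β c).aestronglyMeasurable.restrict) ?_
    filter_upwards with t
    have h1 : gmFun β c t ≤ (1 / β) * Real.exp (-(1 / β) * t) := by
      unfold gmFun
      have h2 : Real.exp (-(c * Real.exp (-t / β))) ≤ 1 := by
        rw [Real.exp_le_one_iff]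
        have : (0:ℝ) ≤ c * Real.exp (-t / β) := by positivity
        linarith
      have h3 : Real.exp (-t / β) * Real.exp (-(c * Real.exp (-t / β))) ≤ Real.exp (-t / β) * 1 :=
        mul_le_mul_of_nonneg_left h2 (Real.exp_pos _).le
      have h4 : -t / β = -(1 / β) * t := by ring
      calc (1 / β) * (Real.exp (-t / β) * Real.exp (-(c * Real.exp (-t / β))))
          ≤ (1 / β) * (Real.exp (-t / β) * 1) := by
            exact mul_le_mul_of_nonneg_left h3 (by positivity)
        _ = (1 / β) * Real.exp (-(1 / β) * t) := by rw [mul_one, h4]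
    rw [Real.norm_eq_abs, abs_of_nonneg (gmFun_nonneg β c t hβ)]
    exact h1

lemma integral_gmFun (hβ : 0 < β) (hc : 0 < c) : ∫ t, gmFun β c t = 1 / c := by
  have := integral_of_hasDerivAt_of_tendsto (fun t => hasDerivAt_G hβ hc.ne' t)
    (integrable_gmFun hβ hc) (tendsto_G_atBot hβ hc) (tendsto_G_atTop hβ hc)
  simpa using this

end Aux

section CDF

variable {β : ℝ}

lemma gumbel_apply_Iio (hβ : 0 < β) (x : ℝ) :
    gumbelMeasure β (Iio x) = ENNReal.ofReal (Real.exp (-Real.exp (-x / β))) := by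
  rw [gumbelMeasure, withDensity_apply _ measurableSet_Iio]
  have hfg : ∀ z : ℝ, (1 / β) * Real.exp (-z / β - Real.exp (-z / β)) = gmFun β 1 z := by
    intro z
    unfold gmFun
    rw [sub_eq_add_neg, Real.exp_add, one_mul]
  simp_rw [hfg]
  rw [← ofReal_integral_eq_lintegral_ofReal ((integrable_gmFun hβ one_pos).integrableOn)
    (ae_of_all _ fun t => gmFun_nonneg β 1 t hβ)]
  congr 1
  rw [← integral_Iic_eq_integral_Iio]
  rw [integral_Iic_of_hasDerivAt_of_tendsto' (fun t _ => hasDerivAt_G hβ one_ne_zero t)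
    ((integrable_gmFun hβ one_pos).integrableOn) (tendsto_G_atBot hβ one_pos)]
  simp

end CDF

lemma measurePi_congr {ι : Type*} {α : ι → Type*} [M : ∀ i, MeasurableSpace (α i)]
    (F1 F2 : Fintype ι) (μ : ∀ i, Measure (α i)) :
    @Measure.pi ι α F1 M μ = @Measure.pi ι α F2 M μ := by
  cases Subsingleton.elim F1 F2
  rfl

/-- Gumbel-max trick: under `m` independent Gumbel(β) perturbations, the probability
that index `j` has the strictly largest perturbed score equals the softmax of `y`
at temperature `β`. -/
theorem gumbel_max_trick (m : ℕ) (hm : 1 ≤ m) (β : ℝ) (hβ : 0 < β)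
    (y : Fin m → ℝ) (j : Fin m) :
    Measure.pi (fun _ : Fin m => gumbelMeasure β)
        {z : Fin m → ℝ | ∀ i, i ≠ j → y j + z j > y i + z i} =
      ENNReal.ofReal (Real.exp (y j / β) / ∑ i, Real.exp (y i / β)) := by

  classical
  set S : Set (Fin m → ℝ) := {z : Fin m → ℝ | ∀ i, i ≠ j → y j + z j > y i + z i} with hSdef
  set p : Fin m → Prop := fun i => i = j with hp
  haveI : DecidablePred p := fun i => inferInstanceAs (Decidable (i = j))
  -- measurability of S
  have hSmeas : MeasurableSet S := by
    have : S = ⋂ i, ⋂ (_ : i ≠ j), {z : Fin m → ℝ | y i + z i < y j + z j} := by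
      ext z; simp [hSdef, gt_iff_lt]
    rw [this]
    exact MeasurableSet.iInter fun i => MeasurableSet.iInter fun _ =>
      measurableSet_lt (by fun_prop)
        (by fun_prop)
  set e := MeasurableEquiv.piEquivPiSubtypeProd (fun _ : Fin m => ℝ) p with he
  have mp := measurePreserving_piEquivPiSubtypeProd (fun _ : Fin m => gumbelMeasure β) p
  have hPS := ((mp.symm e).measure_preimage_equiv S).symm
  rw [hPS]
  -- the slice
  have happ : ∀ (a : {i // p i} → ℝ) (b : {i // ¬ p i} → ℝ) (i : Fin m),
      e.symm (a, b) i = if h : p i then a ⟨i, h⟩ else b ⟨i, h⟩ := by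
    intro a b i
    rfl
  have hslice : ∀ a : {i // p i} → ℝ,
      (Prod.mk a ⁻¹' (e.symm ⁻¹' S)) =
        Set.pi univ (fun i' : {i // ¬ p i} => Iio (y j + a ⟨j, rfl⟩ - y i'.1)) := by
    intro a
    ext b
    simp only [mem_preimage, Set.mem_pi, mem_univ, true_implies, mem_Iio, hSdef, mem_setOf_eq]
    have e1 : e.symm (a, b) j = a ⟨j, rfl⟩ := by rw [happ, dif_pos rfl]
    have e2 : ∀ (i : Fin m) (h : ¬ p i), e.symm (a, b) i = b ⟨i, h⟩ := by
      intro i h; rw [happ, dif_neg h]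
    constructor
    · intro h i'
      have h2 := h i'.1 i'.2
      rw [e1, e2 i'.1 i'.2] at h2
      have : (⟨i'.1, i'.2⟩ : {i // ¬ p i}) = i' := rfl
      rw [this] at h2
      linarith
    · intro h i hi
      have h2 := h ⟨i, hi⟩
      rw [e1, e2 i hi]
      linarith
  rw [Measure.prod_apply (e.symm.measurable hSmeas)]
  simp only [hslice, Measure.pi_pi, gumbel_apply_Iio hβ]
  -- reduce to one-dimensional lintegral
  set K : ℝ := ∑ i' : {i // ¬ p i}, Real.exp ((y i'.1 - y j) / β) with hK
  have hK0 : 0 ≤ K := Finset.sum_nonneg fun _ _ => (Real.exp_pos _).le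
  have hc : (0 : ℝ) < 1 + K := by linarith
  set g : ℝ → ENNReal := fun t =>
    ENNReal.ofReal (Real.exp (-(K * Real.exp (-t / β)))) with hg
  have hg_meas : Measurable g := by
    apply ENNReal.measurable_ofReal.comp
    fun_prop
  have hprod : ∀ t : ℝ,
      (∏ i' : {i // ¬ p i},
        ENNReal.ofReal (Real.exp (-Real.exp (-(y j + t - y i'.1) / β)))) = g t := by
    intro t
    rw [hg, ← ENNReal.ofReal_prod_of_nonneg (fun _ _ => (Real.exp_pos _).le)]
    congr 1
    rw [← Real.exp_sum]
    congr 1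
    have hterm : ∀ i' : {i // ¬ p i},
        -Real.exp (-(y j + t - y i'.1) / β) =
          -(Real.exp ((y i'.1 - y j) / β) * Real.exp (-t / β)) := by
      intro i'
      rw [← Real.exp_add]
      congr 1
      ring
    rw [Finset.sum_congr rfl fun i' _ => hterm i', Finset.sum_neg_distrib, ← Finset.sum_mul]
  have hdefault : (⟨j, rfl⟩ : {i // p i}) = default := Subsingleton.elim _ _
  simp only [hprod, hdefault]
  have hstep : (∫⁻ x : {i // p i} → ℝ, g (x default) ∂Measure.pi fun _ => gumbelMeasure β) =
      ∫⁻ t, g t ∂gumbelMeasure β :=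
    (measurePreserving_funUnique (gumbelMeasure β) {i // p i}).lintegral_comp hg_meas
  have hmain : ∫⁻ t, g t ∂gumbelMeasure β =
      ENNReal.ofReal (Real.exp (y j / β) / ∑ i, Real.exp (y i / β)) := by
    rw [gumbelMeasure, lintegral_withDensity_eq_lintegral_mul _ (by fun_prop) hg_meas]
    have hpt : ∀ t : ℝ,
        ((fun z => ENNReal.ofReal ((1 / β) * Real.exp (-z / β - Real.exp (-z / β)))) * g) t =
          ENNReal.ofReal (gmFun β (1 + K) t) := by
      intro t
      simp only [Pi.mul_apply, hg]
      rw [← ENNReal.ofReal_mul (by positivity)]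
      congr 1
      unfold gmFun
      have h1 : -t / β - Real.exp (-t / β) = -t / β + -Real.exp (-t / β) := by ring
      have h2 : -((1 + K) * Real.exp (-t / β)) =
          -Real.exp (-t / β) + -(K * Real.exp (-t / β)) := by ring
      rw [h1, Real.exp_add, h2, Real.exp_add]
      ring
    simp only [hpt]
    rw [← ofReal_integral_eq_lintegral_ofReal (integrable_gmFun hβ hc)
      (ae_of_all _ fun t => gmFun_nonneg β (1 + K) t hβ), integral_gmFun hβ hc]
    -- final arithmetic
    congr 1
    have hsum : (1 : ℝ) + K = ∑ i : Fin m, Real.exp ((y i - y j) / β) := by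
      rw [← Finset.add_sum_erase Finset.univ (fun i => Real.exp ((y i - y j) / β))
        (Finset.mem_univ j)]
      congr 1
      · simp
      · rw [hK]
        exact (Finset.sum_subtype (p := fun i => ¬ p i) (Finset.univ.erase j)
          (fun x => by simp [p, Finset.mem_erase])
          (fun i => Real.exp ((y i - y j) / β))).symm
    have hS2 : ∑ i, Real.exp (y i / β) =
        (∑ i : Fin m, Real.exp ((y i - y j) / β)) * Real.exp (y j / β) := by
      rw [Finset.sum_mul]
      apply Finset.sum_congr rfl
      intro i _
      rw [← Real.exp_add]
      congr 1
      rw [← add_div, sub_add_cancel]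
    rw [hsum] at hc ⊢
    rw [hS2, div_eq_div_iff hc.ne' (mul_pos hc (Real.exp_pos _)).ne']
    ring
  refine Eq.trans (Eq.trans ?_ hstep) hmain
  exact congrArg (fun μ => ∫⁻ x : {i // p i} → ℝ, g (x default) ∂μ)
    (measurePi_congr _ _ (fun _ => gumbelMeasure β))
end

section
/- Softmax stability (core inequality of the exponential mechanism). Let m ≥ 1, β > 0, Δ ≥ 0, and let y, y' : Fin m → ℝ satisfy |y(i) − y'(i)| ≤ Δ for all i. Then for every j ∈ Fin m, exp(y(j)/β) / Σ_i exp(y(i)/β) ≤ exp(2Δ/β) · exp(y'(j)/β) / Σ_i exp(y'(i)/β). -/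
open Real

/-- Softmax stability (core inequality of the exponential mechanism): if
`|y i − y' i| ≤ Δ` for all `i`, then the softmax probabilities at temperature `β`
differ by a multiplicative factor of at most `exp(2Δ/β)`. -/
theorem softmax_stability (m : ℕ) (hm : 1 ≤ m) (β Δ : ℝ) (hβ : 0 < β) (hΔ : 0 ≤ Δ)
    (y y' : Fin m → ℝ) (hyy' : ∀ i, |y i - y' i| ≤ Δ) (j : Fin m) :
    Real.exp (y j / β) / ∑ i, Real.exp (y i / β) ≤
      Real.exp (2 * Δ / β) * Real.exp (y' j / β) / ∑ i, Real.exp (y' i / β) := by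
  have hne : Nonempty (Fin m) := ⟨⟨0, hm⟩⟩
  have hS : 0 < ∑ i, Real.exp (y i / β) :=
    Finset.sum_pos (fun i _ => Real.exp_pos _) Finset.univ_nonempty
  have hS' : 0 < ∑ i, Real.exp (y' i / β) :=
    Finset.sum_pos (fun i _ => Real.exp_pos _) Finset.univ_nonempty
  rw [div_le_div_iff₀ hS hS']
  have h1 : Real.exp (y j / β) ≤ Real.exp (Δ / β) * Real.exp (y' j / β) := by
    rw [← Real.exp_add]
    apply Real.exp_le_exp.mpr
    have := (abs_le.mp (hyy' j)).2
    rw [← add_div]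
    exact div_le_div_of_nonneg_right (by linarith) hβ.le
  have h2 : ∑ i, Real.exp (y' i / β) ≤ Real.exp (Δ / β) * ∑ i, Real.exp (y i / β) := by
    rw [Finset.mul_sum]
    apply Finset.sum_le_sum
    intro i _
    rw [← Real.exp_add]
    apply Real.exp_le_exp.mpr
    have := (abs_le.mp (hyy' i)).1
    rw [← add_div]
    exact div_le_div_of_nonneg_right (by linarith) hβ.le
  calc Real.exp (y j / β) * ∑ i, Real.exp (y' i / β)
      ≤ (Real.exp (Δ / β) * Real.exp (y' j / β)) * (Real.exp (Δ / β) * ∑ i, Real.exp (y i / β)) := by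
        apply mul_le_mul h1 h2 hS'.le (by positivity)
    _ = Real.exp (2 * Δ / β) * Real.exp (y' j / β) * ∑ i, Real.exp (y i / β) := by
        rw [two_mul, add_div, Real.exp_add]; ring
end

section
/- Pure differential privacy of report-noisy-max with Gumbel noise. Let m ≥ 1, β > 0, Δ ≥ 0, and let y, y' : Fin m → ℝ satisfy |y(i) − y'(i)| ≤ Δ for all i. Let P be the product on (Fin m → ℝ) of m independent copies of the Gumbel measure with scale β. Then for every j ∈ Fin m, P({ z | ∀ i ≠ j, y(j) + z(j) > y(i) + z(i) }) ≤ exp(2Δ/β) · P({ z | ∀ i ≠ j, y'(j) + z(j) > y'(i) + z(i) }), i.e., reporting the index of the maximum Gumbel-perturbed score is (2Δ/β)-differentially private with respect to changes of the score vector of ℓ∞-magnitude at most Δ. -/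
open MeasureTheory Real

/-- The product measure is monotone in each factor. -/
lemma measure_pi_mono {ι : Type*} [Fintype ι] {α : ι → Type*} [∀ i, MeasurableSpace (α i)]
    {μ ν : ∀ i, Measure (α i)} (h : ∀ i, μ i ≤ ν i) : Measure.pi μ ≤ Measure.pi ν := by
  have houter : (OuterMeasure.pi fun i => (μ i).toOuterMeasure) ≤
      OuterMeasure.pi fun i => (ν i).toOuterMeasure := by
    simp only [OuterMeasure.pi]
    rw [OuterMeasure.le_boundedBy]
    intro s
    refine (OuterMeasure.boundedBy_le s).trans ?_
    unfold MeasureTheory.piPremeasure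
    exact Finset.prod_le_prod' fun i _ => h i _
  rw [Measure.le_iff]
  intro s hs
  rw [Measure.pi_def, Measure.pi_def, toMeasure_apply _ _ hs, toMeasure_apply _ _ hs]
  exact houter s

/-- Mapping a `withDensity` measure by a translation translates the density. -/
lemma map_add_withDensity (c : ℝ) {g : ℝ → ENNReal} (hg : Measurable g) :
    Measure.map (· + c) (volume.withDensity g) =
      volume.withDensity fun x => g (x - c) := by
  ext s hs
  rw [Measure.map_apply (measurable_add_const c) hs, withDensity_apply _ hs,
    withDensity_apply _ (hs.preimage (measurable_add_const c))]
  calc ∫⁻ x in (· + c) ⁻¹' s, g x ∂volume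
      = ∫⁻ x in (· + c) ⁻¹' s, g (x + c - c) ∂volume := by simp
    _ = ∫⁻ x in s, g (x - c) ∂(Measure.map (· + c) volume) :=
        (setLIntegral_map hs (hg.comp (measurable_sub_const c))
          (measurable_add_const c)).symm
    _ = ∫⁻ x in s, g (x - c) ∂volume := by rw [map_add_right_eq_self volume c]

/-- Pure differential privacy of report-noisy-max with Gumbel noise: if the score
vectors `y, y'` differ by at most `Δ` in each coordinate, then the probability that
index `j` is the argmax of the Gumbel(β)-perturbed scores changes by a multiplicative
factor of at most `exp(2Δ/β)`. -/
theorem reportNoisyMax_gumbel_pureDP (m : ℕ) (hm : 1 ≤ m) (β Δ : ℝ)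
    (hβ : 0 < β) (hΔ : 0 ≤ Δ) (y y' : Fin m → ℝ) (hyy' : ∀ i, |y i - y' i| ≤ Δ)
    (j : Fin m) :
    Measure.pi (fun _ : Fin m => gumbelMeasure β)
        {z : Fin m → ℝ | ∀ i, i ≠ j → y j + z j > y i + z i} ≤
      ENNReal.ofReal (Real.exp (2 * Δ / β)) *
        Measure.pi (fun _ : Fin m => gumbelMeasure β)
          {z : Fin m → ℝ | ∀ i, i ≠ j → y' j + z j > y' i + z i} := by
  classical
  set c : ℝ := 2 * Δ with hc
  have hc0 : 0 ≤ c := by positivity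
  set k : ENNReal := ENNReal.ofReal (Real.exp (2 * Δ / β)) with hk
  -- the Gumbel density
  set g : ℝ → ENNReal :=
    fun z => ENNReal.ofReal ((1 / β) * Real.exp (-z / β - Real.exp (-z / β))) with hgdef
  have hg : Measurable g := by
    apply Measurable.ennreal_ofReal
    fun_prop
  have hgum : gumbelMeasure β = volume.withDensity g := rfl
  haveI hsg : SigmaFinite (gumbelMeasure β) := by
    unfold gumbelMeasure; exact SigmaFinite.withDensity_ofReal _
  -- the per-coordinate maps
  set f : Fin m → ℝ → ℝ := fun i x => if i = j then x + c else x with hf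
  have hfmeas : ∀ i, Measurable (f i) := by
    intro i
    by_cases hij : i = j
    · simp only [hf, if_pos hij]
      exact measurable_add_const c
    · simp only [hf, if_neg hij]
      exact measurable_id
  -- the target measure of each coordinate
  set ν : Fin m → Measure ℝ :=
    fun i => if i = j then Measure.map (· + c) (gumbelMeasure β) else gumbelMeasure β with hν
  have hνj : ν j = volume.withDensity fun x => g (x - c) := by
    simp only [hν, if_pos rfl, hgum]
    exact map_add_withDensity c hg
  have hνi : ∀ i, i ≠ j → ν i = gumbelMeasure β := fun i hij => by simp [hν, hij]
  have hsf : ∀ i, SigmaFinite (ν i) := by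
    intro i
    by_cases hij : i = j
    · subst hij
      rw [hνj]
      exact SigmaFinite.withDensity_ofReal _
    · rw [hνi i hij, hgum]
      exact SigmaFinite.withDensity_ofReal _
  haveI hI1 := hsf
  -- measure preserving coordinatewise maps
  have hmp : ∀ i, MeasurePreserving (f i) (gumbelMeasure β) (ν i) := by
    intro i
    by_cases hij : i = j
    · have hfj : f i = (· + c) := by funext x; simp [hf, hij]
      rw [hfj]
      refine ⟨measurable_add_const c, ?_⟩
      simp [hν, hij]
    · have hfi : f i = id := by funext x; simp [hf, hij]
      rw [hfi, hνi i hij]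
      exact MeasurePreserving.id _
  have hS : MeasurePreserving (fun z : Fin m → ℝ => fun i => f i (z i))
      (Measure.pi fun _ => gumbelMeasure β) (Measure.pi ν) :=
    measurePreserving_pi _ _ hmp
  -- measurability of the events
  have hmeasSet : ∀ w : Fin m → ℝ,
      MeasurableSet {z : Fin m → ℝ | ∀ i, i ≠ j → w j + z j > w i + z i} := by
    intro w
    have : {z : Fin m → ℝ | ∀ i, i ≠ j → w j + z j > w i + z i} =
        ⋂ i, ⋂ (_ : i ≠ j), {z : Fin m → ℝ | w i + z i < w j + z j} := by
      ext z; simp [Set.mem_iInter]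
    rw [this]
    exact MeasurableSet.iInter fun i => MeasurableSet.iInter fun _ =>
      measurableSet_lt (measurable_const.add (measurable_pi_apply i))
        (measurable_const.add (measurable_pi_apply j))
  -- the inclusion into the shifted event
  have hsub : {z : Fin m → ℝ | ∀ i, i ≠ j → y j + z j > y i + z i} ⊆
      (fun z : Fin m → ℝ => fun i => f i (z i)) ⁻¹'
        {z : Fin m → ℝ | ∀ i, i ≠ j → y' j + z j > y' i + z i} := by
    intro z hz i hij
    have h1 := abs_le.1 (hyy' i)
    have h2 := abs_le.1 (hyy' j)
    have hzi := hz i hij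
    simp only [Set.mem_setOf_eq, hf, if_pos rfl, if_neg hij]
    have hjj : (if (j : Fin m) = j then z j + c else z j) = z j + c := if_pos rfl
    simp only [hc] at *
    linarith
  -- density comparison: the shifted density is at most `k` times the original
  have hdens : (fun x => g (x - c)) ≤ fun x => k * g x := by
    intro x
    simp only [hgdef, hk]
    rw [← ENNReal.ofReal_mul (Real.exp_nonneg _)]
    apply ENNReal.ofReal_le_ofReal
    rw [show Real.exp (2 * Δ / β) * ((1 / β) * Real.exp (-x / β - Real.exp (-x / β)))
        = (1 / β) * (Real.exp (2 * Δ / β) * Real.exp (-x / β - Real.exp (-x / β))) by ring,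
      ← Real.exp_add]
    apply mul_le_mul_of_nonneg_left _ (by positivity)
    apply Real.exp_le_exp.2
    have hxc : -(x - c) / β = c / β + -x / β := by ring
    have hexp : Real.exp (-x / β) ≤ Real.exp (c / β + -x / β) := by
      apply Real.exp_le_exp.2
      have : 0 ≤ c / β := div_nonneg hc0 hβ.le
      linarith
    have hcg : 2 * Δ / β = c / β := by rw [hc]
    rw [hxc, hcg]
    linarith
  -- compare ν with the scaled Gumbel coordinatewise
  have hνle : ∀ i, ν i ≤ (fun i => if i = j then k • gumbelMeasure β else gumbelMeasure β) i := by
    intro i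
    by_cases hij : i = j
    · subst hij
      simp only [if_pos rfl]
      rw [hνj, hgum, ← withDensity_smul' k g (by simp [hk])]
      exact withDensity_mono (Filter.Eventually.of_forall hdens)
    · simp only [if_neg hij, hνi i hij]
      exact le_rfl
  have hsf2 : ∀ i : Fin m,
      SigmaFinite ((fun i => if i = j then k • gumbelMeasure β else gumbelMeasure β) i) := by
    intro i
    by_cases hij : i = j
    · simp only [if_pos hij]
      rw [hgum, ← withDensity_smul' k g (by simp [hk])]
      exact SigmaFinite.withDensity_of_ne_top' fun x => by
        simp only [hgdef]
        exact ENNReal.mul_ne_top (by simp [hk]) ENNReal.ofReal_ne_top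
    · simp only [if_neg hij, hgum]
      exact SigmaFinite.withDensity_ofReal _
  haveI hI2 := hsf2
  -- the pi measure of the scaled family is the scaled pi measure
  have hpik : Measure.pi (fun i => if i = j then k • gumbelMeasure β else gumbelMeasure β) =
      k • Measure.pi (fun _ : Fin m => gumbelMeasure β) := by
    refine Measure.pi_eq fun s hs => ?_
    rw [Measure.smul_apply, Measure.pi_pi, smul_eq_mul]
    rw [show (∏ i, (if i = j then k • gumbelMeasure β else gumbelMeasure β) (s i))
        = ∏ i, (if i = j then k else 1) * gumbelMeasure β (s i) by
      refine Finset.prod_congr rfl fun i _ => ?_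
      by_cases hij : i = j <;> simp [hij]]
    rw [Finset.prod_mul_distrib, Finset.prod_ite_eq' Finset.univ j (fun _ => k)]
    simp
  -- put the chain together
  calc Measure.pi (fun _ : Fin m => gumbelMeasure β)
        {z : Fin m → ℝ | ∀ i, i ≠ j → y j + z j > y i + z i}
      ≤ Measure.pi (fun _ : Fin m => gumbelMeasure β)
        ((fun z : Fin m → ℝ => fun i => f i (z i)) ⁻¹'
          {z : Fin m → ℝ | ∀ i, i ≠ j → y' j + z j > y' i + z i}) := measure_mono hsub
    _ = Measure.map (fun z : Fin m → ℝ => fun i => f i (z i))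
          (Measure.pi fun _ => gumbelMeasure β)
          {z : Fin m → ℝ | ∀ i, i ≠ j → y' j + z j > y' i + z i} :=
        (Measure.map_apply hS.measurable (hmeasSet y')).symm
    _ = Measure.pi ν {z : Fin m → ℝ | ∀ i, i ≠ j → y' j + z j > y' i + z i} := by
        rw [hS.map_eq]
    _ ≤ Measure.pi (fun i => if i = j then k • gumbelMeasure β else gumbelMeasure β)
          {z : Fin m → ℝ | ∀ i, i ≠ j → y' j + z j > y' i + z i} :=
        measure_pi_mono hνle _
    _ = k * Measure.pi (fun _ : Fin m => gumbelMeasure β)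
          {z : Fin m → ℝ | ∀ i, i ≠ j → y' j + z j > y' i + z i} := by
        rw [hpik, Measure.smul_apply, smul_eq_mul]
end
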